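/- Let m ≥ 2 and let G = ℝ/mℤ with its Haar probability measure. Let (R_{ij})_{i≠j, i,j∈{1,…,m}} be independent random variables each distributed according to the Haar (uniform) measure on G, and for inputs x = (x_1,…,x_m) ∈ G^m define S_i(x) = x_i + Σ_{j≠i} R_{ji} − Σ_{j≠i} R_{ij} ∈ G. Then for any two input vectors x, x' ∈ G^m with x_1 + ⋯ + x_m = x'_1 + ⋯ + x'_m in G, the random vectors (S_1(x),…,S_m(x)) and (S_1(x'),…,S_m(x')) have the same distribution. In particular, the joint law of the publicly revealed values (S_1,…,S_m) depends on the private inputs only through their sum modulo m. -/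

import Mathlib

open MeasureTheory ProbabilityTheory

/-- **The revealed values of the Secure-Sum protocol depend only on the sum of the inputs.**
Let `m ≥ 2`, `G = ℝ/mℤ` with its Haar probability measure, and let `(R i j)` (for ordered
pairs `i ≠ j` of parties in `{1, …, m}`) be independent random variables, each Haar-uniform
on `G`.  For inputs `x ∈ G^m`, party `i` reveals `S_i(x) = x i + ∑_{j≠i} R j i - ∑_{j≠i} R i j`.
Then for any inputs `x, x'` with the same sum, `(S_1(x), …, S_m(x))` and
`(S_1(x'), …, S_m(x'))` have the same distribution. -/
theorem secure_sum_output_law (m : ℕ) (hm : 2 ≤ m) [Fact ((0 : ℝ) < (m : ℝ))]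
    {Ω : Type*} [MeasurableSpace Ω] (μ : Measure Ω) [IsProbabilityMeasure μ]
    (R : {p : Fin m × Fin m // p.1 ≠ p.2} → Ω → AddCircle (m : ℝ))
    (hmeas : ∀ p, Measurable (R p))
    (hindep : iIndepFun R μ)
    (hunif : ∀ p, Measure.map (R p) μ = AddCircle.haarAddCircle)
    (S : (Fin m → AddCircle (m : ℝ)) → Ω → Fin m → AddCircle (m : ℝ))
    (hS : ∀ x ω i, S x ω i = x i +
      (∑ j ∈ Finset.univ.erase i, (if h : j ≠ i then R ⟨(j, i), h⟩ ω else 0)) -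
      ∑ j ∈ Finset.univ.erase i, (if h : i ≠ j then R ⟨(i, j), h⟩ ω else 0))
    (x x' : Fin m → AddCircle (m : ℝ)) (hxx' : ∑ i, x i = ∑ i, x' i) :
    Measure.map (S x) μ = Measure.map (S x') μ := by
  haveI : NeZero m := ⟨by omega⟩
  let G := AddCircle (m : ℝ)
  let ι := {p : Fin m × Fin m // p.1 ≠ p.2}
  -- joint random variable
  set RR : Ω → ι → G := fun ω p => R p ω with hRR
  have hRRmeas : Measurable RR := measurable_pi_lambda _ hmeas
  set ν : Measure (ι → G) := Measure.pi (fun _ : ι => AddCircle.haarAddCircle) with hν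
  have hlaw : Measure.map RR μ = ν := by
    rw [hν]
    refine (Measure.pi_eq fun s hs => ?_).symm
    rw [Measure.map_apply hRRmeas (MeasurableSet.univ_pi hs)]
    have : RR ⁻¹' Set.univ.pi s = ⋂ p ∈ (Finset.univ : Finset ι), R p ⁻¹' s p := by
      ext ω; simp [RR, Set.mem_pi]
    rw [this, hindep.measure_inter_preimage_eq_mul Finset.univ (fun p _ => hs p)]
    refine Finset.prod_congr rfl fun p _ => ?_
    rw [← hunif p, Measure.map_apply (hmeas p) (hs p)]
  -- the deterministic post-processing
  set F : (Fin m → G) → (ι → G) → (Fin m → G) := fun y r i => y i +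
      (∑ j ∈ Finset.univ.erase i, (if h : j ≠ i then r ⟨(j, i), h⟩ else 0)) -
      ∑ j ∈ Finset.univ.erase i, (if h : i ≠ j then r ⟨(i, j), h⟩ else 0) with hF
  have hFmeas : ∀ y, Measurable (F y) := by
    intro y
    refine measurable_pi_lambda _ fun i => ?_
    apply Measurable.sub
    · apply Measurable.add measurable_const
      exact Finset.measurable_sum _ fun j _ => by
        by_cases h : j ≠ i
        · simpa [h] using measurable_pi_apply (⟨(j, i), h⟩ : ι)
        · simp [h]
    · exact Finset.measurable_sum _ fun j _ => by
        by_cases h : i ≠ j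
        · simpa [h] using measurable_pi_apply (⟨(i, j), h⟩ : ι)
        · simp [h]
  have hcomp : ∀ y, S y = F y ∘ RR := by
    intro y; funext ω; funext i; simp [hS, F, RR]
  have hmap : ∀ y, Measure.map (S y) μ = Measure.map (F y) ν := by
    intro y
    rw [hcomp y, ← Measure.map_map (hFmeas y) hRRmeas, hlaw]
  rw [hmap, hmap]
  -- translation trick
  set t : ι → G := fun p => if p.1.2 = 0 then x p.1.1 - x' p.1.1 else 0 with ht
  have key : ∀ r : ι → G, F x (t + r) = F x' r := by
    intro r
    funext i
    have hsplit : ∀ (f : Fin m → ι → G) (hf : ∀ j, (f j) = f j),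
        True := fun _ _ => trivial
    show F x (t + r) i = F x' r i
    simp only [F]
    have e1 : ∀ (c : Fin m → Fin m) (hc : ∀ j ∈ Finset.univ.erase i, (c j).1 = (c j).1), True :=
      fun _ _ => trivial
    -- split the two sums
    have h1 : (∑ j ∈ Finset.univ.erase i, (if h : j ≠ i then (t + r) ⟨(j, i), h⟩ else 0))
        = (∑ j ∈ Finset.univ.erase i, (if h : j ≠ i then t ⟨(j, i), h⟩ else 0))
        + (∑ j ∈ Finset.univ.erase i, (if h : j ≠ i then r ⟨(j, i), h⟩ else 0)) := by
      rw [← Finset.sum_add_distrib]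
      refine Finset.sum_congr rfl fun j hj => ?_
      have h : j ≠ i := Finset.ne_of_mem_erase hj
      simp [h]
    have h2 : (∑ j ∈ Finset.univ.erase i, (if h : i ≠ j then (t + r) ⟨(i, j), h⟩ else 0))
        = (∑ j ∈ Finset.univ.erase i, (if h : i ≠ j then t ⟨(i, j), h⟩ else 0))
        + (∑ j ∈ Finset.univ.erase i, (if h : i ≠ j then r ⟨(i, j), h⟩ else 0)) := by
      rw [← Finset.sum_add_distrib]
      refine Finset.sum_congr rfl fun j hj => ?_
      have h : i ≠ j := (Finset.ne_of_mem_erase hj).symm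
      simp [h]
    rw [h1, h2]
    have hshift : x i + (∑ j ∈ Finset.univ.erase i, (if h : j ≠ i then t ⟨(j, i), h⟩ else 0))
        - (∑ j ∈ Finset.univ.erase i, (if h : i ≠ j then t ⟨(i, j), h⟩ else 0)) = x' i := by
      by_cases hi : i = 0
      · subst hi
        have hA : (∑ j ∈ Finset.univ.erase (0 : Fin m),
            (if h : j ≠ (0 : Fin m) then t ⟨(j, 0), h⟩ else 0))
            = ∑ j ∈ Finset.univ.erase (0 : Fin m), (x j - x' j) := by
          refine Finset.sum_congr rfl fun j hj => ?_
          have h : j ≠ 0 := Finset.ne_of_mem_erase hj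
          rw [dif_pos h]
          simp [t]
        have hB : (∑ j ∈ Finset.univ.erase (0 : Fin m),
            (if h : (0 : Fin m) ≠ j then t ⟨(0, j), h⟩ else 0)) = 0 := by
          refine Finset.sum_eq_zero fun j hj => ?_
          have h : j ≠ 0 := Finset.ne_of_mem_erase hj
          rw [dif_pos (Ne.symm h)]
          exact if_neg h
        rw [hA, hB]
        have hsum : ∀ y : Fin m → G, ∑ j ∈ Finset.univ.erase (0 : Fin m), y j
            = (∑ j, y j) - y 0 := by
          intro y
          rw [eq_sub_iff_add_eq, Finset.sum_erase_add]
          exact Finset.mem_univ 0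
        rw [Finset.sum_sub_distrib, hsum x, hsum x', hxx']
        abel
      · have hA : (∑ j ∈ Finset.univ.erase i,
            (if h : j ≠ i then t ⟨(j, i), h⟩ else 0)) = 0 := by
          refine Finset.sum_eq_zero fun j hj => ?_
          have h : j ≠ i := Finset.ne_of_mem_erase hj
          rw [dif_pos h]
          exact if_neg hi
        have hB : (∑ j ∈ Finset.univ.erase i,
            (if h : i ≠ j then t ⟨(i, j), h⟩ else 0)) = x i - x' i := by
          have h0 : (0 : Fin m) ∈ Finset.univ.erase i := by
            simp [Finset.mem_erase, Ne.symm hi]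
          rw [← Finset.add_sum_erase _ _ h0]
          have : (∑ j ∈ (Finset.univ.erase i).erase (0 : Fin m),
              (if h : i ≠ j then t ⟨(i, j), h⟩ else 0)) = 0 := by
            refine Finset.sum_eq_zero fun j hj => ?_
            have hj0 : j ≠ 0 := Finset.ne_of_mem_erase hj
            have hji : i ≠ j := (Finset.ne_of_mem_erase (Finset.mem_of_mem_erase hj)).symm
            rw [dif_pos hji]
            exact if_neg hj0
          rw [this, add_zero, dif_pos hi]
          simp [t]
        rw [hA, hB]
        abel
    calc x i + ((∑ j ∈ Finset.univ.erase i, (if h : j ≠ i then t ⟨(j, i), h⟩ else 0))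
          + (∑ j ∈ Finset.univ.erase i, (if h : j ≠ i then r ⟨(j, i), h⟩ else 0)))
        - ((∑ j ∈ Finset.univ.erase i, (if h : i ≠ j then t ⟨(i, j), h⟩ else 0))
          + (∑ j ∈ Finset.univ.erase i, (if h : i ≠ j then r ⟨(i, j), h⟩ else 0)))
        = (x i + (∑ j ∈ Finset.univ.erase i, (if h : j ≠ i then t ⟨(j, i), h⟩ else 0))
          - (∑ j ∈ Finset.univ.erase i, (if h : i ≠ j then t ⟨(i, j), h⟩ else 0)))
          + (∑ j ∈ Finset.univ.erase i, (if h : j ≠ i then r ⟨(j, i), h⟩ else 0))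
          - (∑ j ∈ Finset.univ.erase i, (if h : i ≠ j then r ⟨(i, j), h⟩ else 0)) := by abel
      _ = x' i + (∑ j ∈ Finset.univ.erase i, (if h : j ≠ i then r ⟨(j, i), h⟩ else 0))
          - (∑ j ∈ Finset.univ.erase i, (if h : i ≠ j then r ⟨(i, j), h⟩ else 0)) := by
          rw [hshift]
  have hνinv : Measure.map (fun r : ι → G => t + r) ν = ν :=
    map_add_left_eq_self ν t
  calc Measure.map (F x) ν = Measure.map (F x) (Measure.map (fun r => t + r) ν) := by
        rw [hνinv]
    _ = Measure.map (F x ∘ fun r => t + r) ν :=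
        Measure.map_map (hFmeas x) (measurable_const_add t)
    _ = Measure.map (F x') ν := by
        congr 1; funext r; exact key r
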